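/- Let X be a closed acausal subset of the pseudo-Euclidean space ℝ_{(l,p)} and let a ∈ X. Then the normal set N(a) = {x ∈ ℝ^n : Q(x−a) ≤ Q(x−b) for all b ∈ X} is a closed and convex subset of ℝ^n containing a. -/
import Mathlib


open Filter Topology Set

noncomputable section

/-- The pseudo-Euclidean space `ℝ_{(l,p)}`: `ℝ^(l+p)` with the Euclidean topology. -/
abbrev PE (l p : ℕ) := EuclideanSpace ℝ (Fin (l + p))

/-- The quadratic form `Q(x) = ‖x‖_l² − ‖x‖_p²`. -/
def Q (l p : ℕ) (x : PE l p) : ℝ :=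
  ∑ i : Fin (l + p), if (i : ℕ) < l then (x i) ^ 2 else -((x i) ^ 2)

/-- The pseudo-scalar product `⟪x,y⟫ = Σ_{i<l} x_i y_i − Σ_{i≥l} x_i y_i`. -/
def pseudoInner (l p : ℕ) (x y : PE l p) : ℝ :=
  ∑ i : Fin (l + p), if (i : ℕ) < l then x i * y i else -(x i * y i)

/-- `‖x‖_l`: the Euclidean norm of the first `l` coordinates. -/
def normL (l p : ℕ) (x : PE l p) : ℝ :=
  Real.sqrt (∑ i : Fin (l + p), if (i : ℕ) < l then (x i) ^ 2 else 0)

/-- `‖x‖_p`: the Euclidean norm of the last `p` coordinates. -/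
def normP (l p : ℕ) (x : PE l p) : ℝ :=
  Real.sqrt (∑ i : Fin (l + p), if (i : ℕ) < l then 0 else (x i) ^ 2)

/-- `X` is acausal: `Q(x−y) > 0` for all distinct `x, y ∈ X`. -/
def Acausal (l p : ℕ) (X : Set (PE l p)) : Prop :=
  ∀ x ∈ X, ∀ y ∈ X, x ≠ y → 0 < Q l p (x - y)

/-- `X` is `L`-pseudo-Lipschitz: `L‖x−y‖_l ≥ ‖x−y‖_p` for all `x, y ∈ X`. -/
def PseudoLipschitz (l p : ℕ) (L : ℝ) (X : Set (PE l p)) : Prop :=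
  ∀ x ∈ X, ∀ y ∈ X, normP l p (x - y) ≤ L * normL l p (x - y)

/-- The squared-distance function `ρ(a,X) = inf {Q(x−a) : x ∈ X}`. -/
def rho (l p : ℕ) (X : Set (PE l p)) (a : PE l p) : ℝ :=
  sInf ((fun x => Q l p (x - a)) '' X)

/-- The set of closest points `m(a) = {x ∈ X : Q(x−a) = ρ(a,X)}`, via its equivalent
description `m(a) = {x ∈ X : ∀ b ∈ X, Q(x−a) ≤ Q(b−a)}`. -/
def mm (l p : ℕ) (X : Set (PE l p)) (a : PE l p) : Set (PE l p) :=
  {x ∈ X | ∀ b ∈ X, Q l p (x - a) ≤ Q l p (b - a)}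

/-- The medial axis `M_X`: points with at least two closest points in `X`. -/
def medialAxis (l p : ℕ) (X : Set (PE l p)) : Set (PE l p) :=
  {a | (mm l p X a).Nontrivial}

/-- The vacant axis `W_X`: points with no closest point in `X`. -/
def vacantAxis (l p : ℕ) (X : Set (PE l p)) : Set (PE l p) :=
  {a | mm l p X a = ∅}

/-- The normal set `N(a) = {x : a ∈ m(x)}`. -/
def NN (l p : ℕ) (X : Set (PE l p)) (a : PE l p) : Set (PE l p) :=
  {x | a ∈ mm l p X x}

/-- The strict normal set `N'(a) = {x : m(x) = {a}}`. -/
def NN' (l p : ℕ) (X : Set (PE l p)) (a : PE l p) : Set (PE l p) :=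
  {x | mm l p X x = {a}}


lemma pseudoInner_cont (l p : ℕ) (c : PE l p) :
    Continuous (fun x : PE l p => pseudoInner l p c x) := by
  unfold pseudoInner
  apply continuous_finset_sum
  intro i _
  by_cases h : (i : ℕ) < l
  · simp only [if_pos h]
    exact continuous_const.mul (EuclideanSpace.proj (𝕜 := ℝ) i).continuous
  · simp only [if_neg h]
    exact (continuous_const.mul (EuclideanSpace.proj (𝕜 := ℝ) i).continuous).neg

lemma pseudoInner_lin (l p : ℕ) (c x y : PE l p) (t s : ℝ) :
    pseudoInner l p c (t • x + s • y)
      = t * pseudoInner l p c x + s * pseudoInner l p c y := by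
  unfold pseudoInner
  rw [Finset.mul_sum, Finset.mul_sum, ← Finset.sum_add_distrib]
  apply Finset.sum_congr rfl
  intro i _
  have hx : (t • x + s • y) i = t * x i + s * y i := rfl
  rw [hx]
  split <;> ring

lemma keyQ (l p : ℕ) (a b x : PE l p) :
    Q l p (b - x) - Q l p (a - x)
      = (Q l p b - Q l p a) - 2 * pseudoInner l p (b - a) x := by
  unfold Q pseudoInner
  rw [Finset.mul_sum]
  simp only [← Finset.sum_sub_distrib]
  apply Finset.sum_congr rfl
  intro i _
  have h1 : (b - x) i = b i - x i := rfl
  have h2 : (a - x) i = a i - x i := rfl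
  have h3 : (b - a) i = b i - a i := rfl
  rw [h1, h2, h3]
  split <;> ring

lemma keyQ_iff (l p : ℕ) (a b x : PE l p) :
    Q l p (a - x) ≤ Q l p (b - x) ↔
      2 * pseudoInner l p (b - a) x ≤ Q l p b - Q l p a := by
  rw [← sub_nonneg, keyQ, sub_nonneg]

/-- For closed acausal `X` and `a ∈ X`, the normal set
`N(a) = {x : Q(x−a) ≤ Q(x−b) for all b ∈ X}` is closed, convex and contains `a`. -/
theorem normalSet_closed_convex (l p : ℕ) (hl : 1 ≤ l)
    (X : Set (PE l p)) (hX : IsClosed X) (hac : Acausal l p X)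
    (a : PE l p) (ha : a ∈ X) :
    a ∈ NN l p X a ∧ IsClosed (NN l p X a) ∧ Convex ℝ (NN l p X a) := by
  have hQ0 : Q l p (a - a) = 0 := by simp [Q]
  have hmem : a ∈ NN l p X a := by
    refine ⟨ha, fun b hb => ?_⟩
    rw [hQ0]
    rcases eq_or_ne b a with rfl | hne
    · rw [hQ0]
    · exact le_of_lt (hac b hb a ha hne)
  have hset : NN l p X a =
      ⋂ b ∈ X, {x | 2 * pseudoInner l p (b - a) x ≤ Q l p b - Q l p a} := by
    ext x
    simp only [NN, mm, Set.mem_setOf_eq, Set.mem_iInter, Set.mem_sep_iff]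
    constructor
    · intro ⟨_, h⟩ b hb
      exact (keyQ_iff l p a b x).mp (h b hb)
    · intro h
      exact ⟨ha, fun b hb => (keyQ_iff l p a b x).mpr (h b hb)⟩
  refine ⟨hmem, ?_, ?_⟩
  · rw [hset]
    exact isClosed_biInter fun b hb =>
      isClosed_le (continuous_const.mul (pseudoInner_cont l p (b - a))) continuous_const
  · rw [hset]
    apply convex_iInter₂
    intro b hb
    intro x hx y hy t s ht hs hts
    simp only [Set.mem_setOf_eq] at hx hy ⊢
    rw [pseudoInner_lin]
    calc 2 * (t * pseudoInner l p (b - a) x + s * pseudoInner l p (b - a) y)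
        = t * (2 * pseudoInner l p (b - a) x) + s * (2 * pseudoInner l p (b - a) y) := by ring
      _ ≤ t * (Q l p b - Q l p a) + s * (Q l p b - Q l p a) := by
          exact add_le_add (mul_le_mul_of_nonneg_left hx ht) (mul_le_mul_of_nonneg_left hy hs)
      _ = Q l p b - Q l p a := by rw [← add_mul, hts, one_mul]
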